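/- sup_{μ∈M_V(μ₁,μ₂)} E^μ[V] = sup_{μ∈M(μ₁,μ₂)} E^{μ₁}[√(Λ_μ(S₁))]; that is, the dual superreplication value for the VIX future is attained over models of local volatility type in which V = √(Λ_μ(S₁)). -/

import Mathlib

open MeasureTheory Set Filter

noncomputable section

/-- The log-contract payoff `L(x) = -(2/τ) ln x`. -/
def Lf (τ x : ℝ) : ℝ := -(2 / τ) * Real.log x

/-- `μ` is a market smile: a probability measure concentrated on `(0,∞)`
with mean `S₀` and integrable logarithm. -/
structure IsMarginal (S₀ : ℝ) (μ : Measure ℝ) : Prop where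
  prob : IsProbabilityMeasure μ
  conc : μ (Set.Ioi (0 : ℝ))ᶜ = 0
  int_id : Integrable (fun s => s) μ
  mean : (∫ s, s ∂μ) = S₀
  int_log : Integrable (fun s => |Real.log s|) μ

/-- `μ ∈ M(μ₁,μ₂)`: a martingale coupling of `μ₁` and `μ₂`. -/
structure MemM (μ₁ μ₂ : Measure ℝ) (μ : Measure (ℝ × ℝ)) : Prop where
  prob : IsProbabilityMeasure μ
  fst : μ.map Prod.fst = μ₁
  snd : μ.map Prod.snd = μ₂
  mart : ∀ h : ℝ → ℝ, Measurable h → (∀ x, |h x| ≤ 1) →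
    ∫ p : ℝ × ℝ, h p.1 * (p.2 - p.1) ∂μ = 0

/-- `μ ∈ M_V(μ₁,μ₂)`: a joint model for `(S₁,S₂,V)` consistent with the smiles. -/
structure MemMV (τ : ℝ) (μ₁ μ₂ : Measure ℝ) (μ : Measure (ℝ × ℝ × ℝ)) : Prop where
  prob : IsProbabilityMeasure μ
  fst : μ.map (fun p => p.1) = μ₁
  snd : μ.map (fun p => p.2.1) = μ₂
  vnonneg : μ {p : ℝ × ℝ × ℝ | p.2.2 < 0} = 0
  int_v2 : Integrable (fun p : ℝ × ℝ × ℝ => p.2.2 ^ 2) μ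
  mart : ∀ h : ℝ → ℝ → ℝ, Measurable (Function.uncurry h) → (∀ x v, |h x v| ≤ 1) →
    ∫ p : ℝ × ℝ × ℝ, h p.1 p.2.2 * (p.2.1 - p.1) ∂μ = 0
  vix : ∀ h : ℝ → ℝ → ℝ, Measurable (Function.uncurry h) → (∀ x v, |h x v| ≤ 1) →
    ∫ p : ℝ × ℝ × ℝ, h p.1 p.2.2 * (Lf τ (p.2.1 / p.1) - p.2.2 ^ 2) ∂μ = 0

/-- `Λ` is (a version of) `Λ_μ`, i.e. `Λ(S₁) = E^μ[L(S₂/S₁) | S₁]`. -/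
def IsCondLambda (τ : ℝ) (μ : Measure (ℝ × ℝ)) (Λ : ℝ → ℝ) : Prop :=
  Measurable Λ ∧ Integrable (fun p : ℝ × ℝ => Λ p.1) μ ∧
    ∀ h : ℝ → ℝ, Measurable h → (∀ x, |h x| ≤ 1) →
      ∫ p : ℝ × ℝ, h p.1 * Lf τ (p.2 / p.1) ∂μ = ∫ p : ℝ × ℝ, h p.1 * Λ p.1 ∂μ



lemma integral_map' {α β : Type*} [MeasurableSpace α] [MeasurableSpace β] {μ : Measure α}
    {f : α → β} (hf : Measurable f) {ρ : Measure β} (hmap : μ.map f = ρ) {g : β → ℝ}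
    (hg : AEStronglyMeasurable g ρ) : ∫ y, g y ∂ρ = ∫ x, g (f x) ∂μ := by
  subst hmap; exact integral_map hf.aemeasurable hg

lemma integrable_map' {α β : Type*} [MeasurableSpace α] [MeasurableSpace β] {μ : Measure α}
    {f : α → β} (hf : Measurable f) {ρ : Measure β} (hmap : μ.map f = ρ) {g : β → ℝ}
    (hg : AEStronglyMeasurable g ρ) :
    Integrable g ρ ↔ Integrable (fun x => g (f x)) μ := by
  subst hmap; exact integrable_map_measure hg hf.aemeasurable

lemma ae_comp_of_map {α β : Type*} [MeasurableSpace α] [MeasurableSpace β] {μ : Measure α}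
    {f : α → β} (hf : Measurable f) {ρ : Measure β} (hmap : μ.map f = ρ) {s : Set β}
    (hs : MeasurableSet s) (h0 : ρ sᶜ = 0) : ∀ᵐ x ∂μ, f x ∈ s := by
  subst hmap
  rw [Measure.map_apply hf hs.compl] at h0
  rw [ae_iff]
  have : {x | ¬ f x ∈ s} = f ⁻¹' sᶜ := by ext x; simp
  rw [this]
  exact h0

lemma abs_log_max_le {x e : ℝ} (hx : 0 < x) (he : 0 < e) (he1 : e ≤ 1) :
    |Real.log (max x e)| ≤ |Real.log x| := by
  rcases le_or_gt e x with hc | hc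
  · rw [max_eq_left hc]
  · rw [max_eq_right hc.le]
    have h2 : Real.log x < Real.log e := Real.log_lt_log hx hc
    have h3 : Real.log e ≤ 0 := Real.log_nonpos he.le he1
    rw [abs_of_nonpos h3, abs_of_nonpos (by linarith)]
    linarith

lemma sqrt_le_half_add (t : ℝ) : Real.sqrt t ≤ (|t| + 1) / 2 := by
  rcases le_or_gt t 0 with h | h
  · rw [Real.sqrt_eq_zero_of_nonpos h]; positivity
  · have h1 : Real.sqrt t ^ 2 = t := Real.sq_sqrt h.le
    have h2 := Real.sqrt_nonneg t
    nlinarith [sq_nonneg (Real.sqrt t - 1), abs_nonneg t, le_abs_self t]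

lemma sq_sqrt_le_abs (t : ℝ) : Real.sqrt t ^ 2 ≤ |t| := by
  rcases le_or_gt t 0 with h | h
  · rw [Real.sqrt_eq_zero_of_nonpos h]; simp [abs_nonneg]
  · rw [Real.sq_sqrt h.le]; exact le_abs_self t

lemma amgm_div {t c : ℝ} (hc : 0 < c) : t ≤ t ^ 2 / (2 * c) + c / 2 := by
  rw [div_add_div _ _ (by positivity) (two_ne_zero), le_div_iff₀ (by positivity)]
  nlinarith [sq_nonneg (t - c)]

lemma div_twomax_le_sqrt {t e : ℝ} (he : 0 < e) :
    t / (2 * max (Real.sqrt t) e) ≤ Real.sqrt t / 2 := by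
  have hmax : 0 < max (Real.sqrt t) e := lt_max_of_lt_right he
  rcases le_or_gt t 0 with h | h
  · have : t / (2 * max (Real.sqrt t) e) ≤ 0 := div_nonpos_of_nonpos_of_nonneg h (by positivity)
    have h2 := Real.sqrt_nonneg t
    linarith
  · have hst : 0 < Real.sqrt t := Real.sqrt_pos.mpr h
    have h1 : t / (2 * max (Real.sqrt t) e) ≤ t / (2 * Real.sqrt t) :=
      div_le_div_of_nonneg_left h.le (by positivity)
        (by have := le_max_left (Real.sqrt t) e; linarith)
    have h2 : t / (2 * Real.sqrt t) = Real.sqrt t / 2 := by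
      rw [show 2 * Real.sqrt t = Real.sqrt t * 2 by ring, ← div_div, Real.div_sqrt]
    linarith


lemma jensen_log (ν : Measure (ℝ × ℝ)) [IsProbabilityMeasure ν]
    (hconc : ∀ᵐ p ∂ν, 0 < p.1 ∧ 0 < p.2)
    (hlog1 : Integrable (fun p : ℝ × ℝ => Real.log p.1) ν)
    (hlog2 : Integrable (fun p : ℝ × ℝ => Real.log p.2) ν)
    (hid1 : Integrable (fun p : ℝ × ℝ => p.1) ν)
    (hid2 : Integrable (fun p : ℝ × ℝ => p.2) ν)
    (hmart : ∀ h : ℝ → ℝ, Measurable h → (∀ x, |h x| ≤ 1) →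
      ∫ p : ℝ × ℝ, h p.1 * (p.2 - p.1) ∂ν = 0)
    (h : ℝ → ℝ) (hh : Measurable h) (h0 : ∀ x, 0 ≤ h x) (h1 : ∀ x, h x ≤ 1) :
    ∫ p : ℝ × ℝ, h p.1 * Real.log p.2 ∂ν ≤ ∫ p : ℝ × ℝ, h p.1 * Real.log p.1 ∂ν := by
  have habsh : ∀ x, |h x| ≤ 1 := fun x => abs_le.mpr ⟨by linarith [h0 x], h1 x⟩
  set ε : ℕ → ℝ := fun n => 1 / ((n : ℝ) + 1) with hε
  have hεpos : ∀ n, 0 < ε n := fun n => by positivity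
  have hεle1 : ∀ n, ε n ≤ 1 := by
    intro n
    rw [hε]
    simp only
    rw [div_le_one (by positivity)]
    linarith [Nat.cast_nonneg (α := ℝ) n]
  set M : ℕ → ℝ → ℝ := fun n x => max x (ε n) with hM
  have hMpos : ∀ n x, 0 < M n x := fun n x => lt_max_of_lt_right (hεpos n)
  have hMge : ∀ n x, ε n ≤ M n x := fun n x => le_max_right _ _
  have hMmeas : ∀ n, Measurable (M n) := fun n => measurable_id.max measurable_const
  set F : ℕ → ℝ × ℝ → ℝ := fun n p => h p.1 * (Real.log (M n p.1) + p.1 / M n p.1 - 1) with hF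
  set A : ℕ → ℝ × ℝ → ℝ := fun n p => h p.1 * (p.2 / M n p.1) with hA
  set B : ℕ → ℝ × ℝ → ℝ := fun n p => h p.1 * (p.1 / M n p.1) with hB
  have hFmeas : ∀ n, Measurable (F n) := fun n =>
    (hh.comp measurable_fst).mul
      (((Real.measurable_log.comp ((hMmeas n).comp measurable_fst)).add
        (measurable_fst.div ((hMmeas n).comp measurable_fst))).sub measurable_const)
  have hAmeas : ∀ n, Measurable (A n) := fun n =>
    (hh.comp measurable_fst).mul (measurable_snd.div ((hMmeas n).comp measurable_fst))
  have hBmeas : ∀ n, Measurable (B n) := fun n =>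
    (hh.comp measurable_fst).mul (measurable_fst.div ((hMmeas n).comp measurable_fst))
  -- norm bound for F n
  have hFbound : ∀ n, ∀ p : ℝ × ℝ, 0 < p.1 → ‖F n p‖ ≤ |Real.log p.1| + 2 := by
    intro n p hp
    have h1' : |Real.log (M n p.1)| ≤ |Real.log p.1| := by
      rcases le_or_gt (ε n) p.1 with hc | hc
      · have : M n p.1 = p.1 := max_eq_left hc
        rw [this]
      · have hMe : M n p.1 = ε n := max_eq_right hc.le
        rw [hMe]
        have h2 : Real.log p.1 < Real.log (ε n) := Real.log_lt_log hp hc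
        have h3 : Real.log (ε n) ≤ 0 := Real.log_nonpos (hεpos n).le (hεle1 n)
        rw [abs_of_nonpos h3, abs_of_nonpos (by linarith)]
        linarith
    have h2' : |p.1 / M n p.1| ≤ 1 := by
      rw [abs_div, div_le_one (lt_of_lt_of_le (hMpos n p.1) (le_abs_self _)),
        abs_of_pos hp, abs_of_pos (hMpos n p.1)]
      exact le_max_left _ _
    have htri : |Real.log (M n p.1) + p.1 / M n p.1 - 1| ≤ |Real.log p.1| + 2 := by
      have a1 := abs_le.mp h1'
      have a2 := abs_le.mp h2'
      rw [abs_le]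
      constructor <;> [linarith; linarith]
    calc ‖F n p‖ = |h p.1| * |Real.log (M n p.1) + p.1 / M n p.1 - 1| := by
          rw [Real.norm_eq_abs, abs_mul]
      _ ≤ 1 * (|Real.log p.1| + 2) :=
          mul_le_mul (habsh p.1) htri (abs_nonneg _) one_pos.le
      _ = |Real.log p.1| + 2 := one_mul _
  have hboundint : Integrable (fun p : ℝ × ℝ => |Real.log p.1| + 2) ν :=
    hlog1.abs.add (integrable_const 2)
  have hFint : ∀ n, Integrable (F n) ν := by
    intro n
    refine hboundint.mono' (hFmeas n).aestronglyMeasurable ?_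
    filter_upwards [hconc] with p hp
    exact hFbound n p hp.1
  have hAint : ∀ n, Integrable (A n) ν := by
    intro n
    refine ((hid2.abs.const_mul (1 / ε n))).mono' (hAmeas n).aestronglyMeasurable ?_
    refine Eventually.of_forall fun p => ?_
    have : |p.2 / M n p.1| ≤ |p.2| / ε n := by
      rw [abs_div, abs_of_pos (hMpos n p.1)]
      exact div_le_div_of_nonneg_left (abs_nonneg _) (hεpos n) (hMge n p.1) |>.trans_eq rfl
    calc ‖A n p‖ = |h p.1| * |p.2 / M n p.1| := by rw [Real.norm_eq_abs, abs_mul]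
      _ ≤ 1 * (|p.2| / ε n) := mul_le_mul (habsh p.1) this (abs_nonneg _) one_pos.le
      _ = 1 / ε n * |p.2| := by ring
  have hBint : ∀ n, Integrable (B n) ν := by
    intro n
    refine ((hid1.abs.const_mul (1 / ε n))).mono' (hBmeas n).aestronglyMeasurable ?_
    refine Eventually.of_forall fun p => ?_
    have : |p.1 / M n p.1| ≤ |p.1| / ε n := by
      rw [abs_div, abs_of_pos (hMpos n p.1)]
      exact div_le_div_of_nonneg_left (abs_nonneg _) (hεpos n) (hMge n p.1)
    calc ‖B n p‖ = |h p.1| * |p.1 / M n p.1| := by rw [Real.norm_eq_abs, abs_mul]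
      _ ≤ 1 * (|p.1| / ε n) := mul_le_mul (habsh p.1) this (abs_nonneg _) one_pos.le
      _ = 1 / ε n * |p.1| := by ring
  -- ∫ (A n - B n) = 0 from the martingale property
  have hAB : ∀ n, ∫ p, (A n p - B n p) ∂ν = 0 := by
    intro n
    have hbnd : ∀ x, |h x * (ε n / M n x)| ≤ 1 := by
      intro x
      rw [abs_mul]
      have : |ε n / M n x| ≤ 1 := by
        rw [abs_div, abs_of_pos (hεpos n), abs_of_pos (hMpos n x),
          div_le_one (hMpos n x)]
        exact hMge n x
      exact mul_le_one₀ (habsh x) (abs_nonneg _) this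
    have hmeas : Measurable fun x => h x * (ε n / M n x) :=
      hh.mul (measurable_const.div (hMmeas n))
    have hmart' := hmart _ hmeas hbnd
    have heq : (fun p : ℝ × ℝ => (h p.1 * (ε n / M n p.1)) * (p.2 - p.1))
        = fun p => ε n * (A n p - B n p) := by
      funext p
      simp only [hA, hB]
      ring
    rw [heq, integral_const_mul] at hmart'
    exact (mul_eq_zero.mp hmart').resolve_left (ne_of_gt (hεpos n))
  -- LHS integrable
  have hLHSint : Integrable (fun p : ℝ × ℝ => h p.1 * Real.log p.2) ν := by
    refine hlog2.abs.mono' ((hh.comp measurable_fst).mul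
      (Real.measurable_log.comp measurable_snd)).aestronglyMeasurable ?_
    refine Eventually.of_forall fun p => ?_
    rw [Real.norm_eq_abs, abs_mul]
    calc |h p.1| * |Real.log p.2| ≤ 1 * |Real.log p.2| :=
          mul_le_mul_of_nonneg_right (habsh p.1) (abs_nonneg _)
      _ = |Real.log p.2| := one_mul _
    -- norm of |log p.2| vs |log p.2| : mono' expects ≤ g pointwise; g = |log p.2| here? careful
  -- step 1 : LHS ≤ ∫ F n
  have hstep1 : ∀ n, (∫ p : ℝ × ℝ, h p.1 * Real.log p.2 ∂ν) ≤ ∫ p, F n p ∂ν := by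
    intro n
    have hptwise : ∀ᵐ p ∂ν, h p.1 * Real.log p.2 ≤ F n p + (A n p - B n p) := by
      filter_upwards [hconc] with p hp
      have ha : 0 < M n p.1 := hMpos n p.1
      have htan : Real.log p.2 ≤ Real.log (M n p.1) + p.2 / M n p.1 - 1 := by
        have := Real.log_le_sub_one_of_pos (div_pos hp.2 ha)
        rw [Real.log_div (ne_of_gt hp.2) (ne_of_gt ha)] at this
        linarith
      have hFAB : F n p + (A n p - B n p)
          = h p.1 * (Real.log (M n p.1) + p.2 / M n p.1 - 1) := by
        simp only [hF, hA, hB]; ring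
      rw [hFAB]
      exact mul_le_mul_of_nonneg_left htan (h0 p.1)
    have hABint : Integrable (fun p : ℝ × ℝ => A n p - B n p) ν := (hAint n).sub (hBint n)
    have hsum : Integrable (fun p : ℝ × ℝ => F n p + (A n p - B n p)) ν := (hFint n).add hABint
    have hmono := integral_mono_ae hLHSint hsum hptwise
    have h2 : ∫ p, (F n p + (A n p - B n p)) ∂ν = ∫ p, F n p ∂ν := by
      rw [integral_add (hFint n) hABint, hAB n, add_zero]
    exact hmono.trans_eq h2
  -- step 2 : DCT
  have htend0 : Tendsto ε atTop (nhds 0) := tendsto_one_div_add_atTop_nhds_zero_nat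
  have hDCT : Tendsto (fun n => ∫ p, F n p ∂ν) atTop
      (nhds (∫ p : ℝ × ℝ, h p.1 * Real.log p.1 ∂ν)) := by
    refine tendsto_integral_of_dominated_convergence (fun p => |Real.log p.1| + 2)
      (fun n => (hFmeas n).aestronglyMeasurable) hboundint ?_ ?_
    · intro n
      filter_upwards [hconc] with p hp
      exact hFbound n p hp.1
    · filter_upwards [hconc] with p hp
      have hev : ∀ᶠ n in atTop, ε n < p.1 := htend0.eventually (gt_mem_nhds hp.1)
      refine Tendsto.congr' ?_ tendsto_const_nhds
      filter_upwards [hev] with n hn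
      have hMn : M n p.1 = p.1 := max_eq_left hn.le
      simp only [hF]
      rw [hMn, div_self (ne_of_gt hp.1)]
      ring
  exact ge_of_tendsto hDCT (Eventually.of_forall hstep1)

section Facts
variable {τ S₀ : ℝ} {μ₁ μ₂ : Measure ℝ} {ν : Measure (ℝ × ℝ)}

lemma MemM.ae_pos (h₁ : IsMarginal S₀ μ₁) (h₂ : IsMarginal S₀ μ₂) (hν : MemM μ₁ μ₂ ν) :
    ∀ᵐ p ∂ν, 0 < p.1 ∧ 0 < p.2 := by
  have a1 : ∀ᵐ p ∂ν, p.1 ∈ Ioi (0:ℝ) :=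
    ae_comp_of_map measurable_fst hν.fst measurableSet_Ioi h₁.conc
  have a2 : ∀ᵐ p ∂ν, p.2 ∈ Ioi (0:ℝ) :=
    ae_comp_of_map measurable_snd hν.snd measurableSet_Ioi h₂.conc
  filter_upwards [a1, a2] with p u1 u2
  exact ⟨u1, u2⟩

lemma IsMarginal.integrable_log (h : IsMarginal S₀ μ₁) : Integrable Real.log μ₁ := by
  refine h.int_log.mono' Real.measurable_log.aestronglyMeasurable ?_
  exact Eventually.of_forall fun x => by rw [Real.norm_eq_abs]

lemma MemM.integrable_log_fst (h₁ : IsMarginal S₀ μ₁) (hν : MemM μ₁ μ₂ ν) :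
    Integrable (fun p : ℝ × ℝ => Real.log p.1) ν :=
  (integrable_map' measurable_fst hν.fst
    Real.measurable_log.aestronglyMeasurable).mp h₁.integrable_log

lemma MemM.integrable_log_snd (h₂ : IsMarginal S₀ μ₂) (hν : MemM μ₁ μ₂ ν) :
    Integrable (fun p : ℝ × ℝ => Real.log p.2) ν :=
  (integrable_map' measurable_snd hν.snd
    Real.measurable_log.aestronglyMeasurable).mp h₂.integrable_log

lemma MemM.integrable_fst (h₁ : IsMarginal S₀ μ₁) (hν : MemM μ₁ μ₂ ν) :
    Integrable (fun p : ℝ × ℝ => p.1) ν :=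
  (integrable_map' measurable_fst hν.fst measurable_id.aestronglyMeasurable).mp h₁.int_id

lemma MemM.integrable_snd (h₂ : IsMarginal S₀ μ₂) (hν : MemM μ₁ μ₂ ν) :
    Integrable (fun p : ℝ × ℝ => p.2) ν :=
  (integrable_map' measurable_snd hν.snd measurable_id.aestronglyMeasurable).mp h₂.int_id

lemma measurable_lf (τ : ℝ) : Measurable (fun p : ℝ × ℝ => Lf τ (p.2 / p.1)) := by
  unfold Lf
  exact measurable_const.mul (Real.measurable_log.comp (measurable_snd.div measurable_fst))

lemma MemM.lf_ae_eq (hτ : 0 < τ) (h₁ : IsMarginal S₀ μ₁) (h₂ : IsMarginal S₀ μ₂)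
    (hν : MemM μ₁ μ₂ ν) :
    (fun p : ℝ × ℝ => Lf τ (p.2 / p.1))
      =ᵐ[ν] fun p => (2 / τ) * (Real.log p.1 - Real.log p.2) := by
  filter_upwards [hν.ae_pos h₁ h₂] with p hp
  unfold Lf
  rw [Real.log_div (ne_of_gt hp.2) (ne_of_gt hp.1)]
  ring

lemma MemM.lf_integrable (hτ : 0 < τ) (h₁ : IsMarginal S₀ μ₁) (h₂ : IsMarginal S₀ μ₂)
    (hν : MemM μ₁ μ₂ ν) : Integrable (fun p : ℝ × ℝ => Lf τ (p.2 / p.1)) ν := by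
  refine Integrable.congr ?_ (hν.lf_ae_eq hτ h₁ h₂).symm
  exact (((hν.integrable_log_fst h₁).sub (hν.integrable_log_snd h₂)).const_mul (2 / τ))

/-- Conditional Jensen: `∫ h(S₁) Λ(S₁) ≥ 0` for nonnegative bounded `h`. -/
lemma MemM.lambda_nonneg (hτ : 0 < τ) (h₁ : IsMarginal S₀ μ₁) (h₂ : IsMarginal S₀ μ₂)
    (hν : MemM μ₁ μ₂ ν) {Λ : ℝ → ℝ} (hΛ : IsCondLambda τ ν Λ) :
    ∀ᵐ x ∂μ₁, 0 ≤ Λ x := by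
  haveI := hν.prob
  obtain ⟨hΛm, hΛint, hΛid⟩ := hΛ
  have hΛμ₁ : Integrable Λ μ₁ :=
    (integrable_map' measurable_fst hν.fst hΛm.aestronglyMeasurable).mpr hΛint
  -- key positivity
  have key : ∀ h : ℝ → ℝ, Measurable h → (∀ x, 0 ≤ h x) → (∀ x, h x ≤ 1) →
      0 ≤ ∫ p : ℝ × ℝ, h p.1 * Λ p.1 ∂ν := by
    intro h hh h0 hb1
    have habsh : ∀ x, |h x| ≤ 1 := fun x => abs_le.mpr ⟨by linarith [h0 x], hb1 x⟩
    rw [← hΛid h hh habsh]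
    have hcongr : (fun p : ℝ × ℝ => h p.1 * Lf τ (p.2 / p.1))
        =ᵐ[ν] fun p => (2 / τ) * (h p.1 * Real.log p.1 - h p.1 * Real.log p.2) := by
      filter_upwards [hν.lf_ae_eq hτ h₁ h₂] with p hp
      rw [hp]; ring
    rw [integral_congr_ae hcongr, integral_const_mul]
    have hint1 : Integrable (fun p : ℝ × ℝ => h p.1 * Real.log p.1) ν :=
      (hν.integrable_log_fst h₁).bdd_mul ((hh.comp measurable_fst)).aestronglyMeasurable
        (c := 1) (Eventually.of_forall fun p => by rw [Real.norm_eq_abs]; exact habsh p.1)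
    have hint2 : Integrable (fun p : ℝ × ℝ => h p.1 * Real.log p.2) ν :=
      (hν.integrable_log_snd h₂).bdd_mul ((hh.comp measurable_fst)).aestronglyMeasurable
        (c := 1) (Eventually.of_forall fun p => by rw [Real.norm_eq_abs]; exact habsh p.1)
    rw [integral_sub hint1 hint2]
    have := jensen_log ν (hν.ae_pos h₁ h₂) (hν.integrable_log_fst h₁)
      (hν.integrable_log_snd h₂) (hν.integrable_fst h₁) (hν.integrable_snd h₂)
      hν.mart h hh h0 hb1
    have h2τ : (0:ℝ) ≤ 2 / τ := by positivity
    exact mul_nonneg h2τ (by linarith)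
  -- apply with indicator of {Λ < 0}
  set N : Set ℝ := {x | Λ x < 0} with hN
  have hNm : MeasurableSet N := measurableSet_lt hΛm measurable_const
  set h : ℝ → ℝ := N.indicator fun _ => 1 with hh
  have hhm : Measurable h := (measurable_const.indicator hNm)
  have hh0 : ∀ x, 0 ≤ h x := fun x => Set.indicator_nonneg (fun _ _ => zero_le_one) x
  have hh1 : ∀ x, h x ≤ 1 := by
    intro x
    rw [hh]
    by_cases hx : x ∈ N <;> simp [Set.indicator_of_mem, Set.indicator_of_notMem, hx]
  have hkey := key h hhm hh0 hh1
  have htrans : ∫ p : ℝ × ℝ, h p.1 * Λ p.1 ∂ν = ∫ x, h x * Λ x ∂μ₁ :=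
    (integral_map' measurable_fst hν.fst ((hhm.mul hΛm)).aestronglyMeasurable).symm
  rw [htrans] at hkey
  have heqpt : ∀ x, h x * Λ x = -(max (-Λ x) 0) := by
    intro x
    rw [hh]
    by_cases hx : x ∈ N
    · have hlt : Λ x < 0 := hx
      rw [Set.indicator_of_mem hx, one_mul, max_eq_left (by linarith : (0:ℝ) ≤ -Λ x)]
      ring
    · have hge : 0 ≤ Λ x := not_lt.mp hx
      rw [Set.indicator_of_notMem hx, zero_mul, max_eq_right (by linarith : -Λ x ≤ 0)]
      ring
  have hmint : Integrable (fun x => max (-Λ x) 0) μ₁ := by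
    refine hΛμ₁.abs.mono' ((hΛm.neg.max measurable_const)).aestronglyMeasurable ?_
    refine Eventually.of_forall fun x => ?_
    have hnn : (0:ℝ) ≤ max (-Λ x) 0 := le_max_right _ _
    rw [Real.norm_eq_abs, abs_of_nonneg hnn]
    exact max_le (neg_le_abs _) (abs_nonneg _)
  have hsum : ∫ x, max (-Λ x) 0 ∂μ₁ = 0 := by
    have he2 : ∫ x, h x * Λ x ∂μ₁ = -∫ x, max (-Λ x) 0 ∂μ₁ := by
      rw [← integral_neg]
      exact integral_congr_ae (Eventually.of_forall fun x => heqpt x)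
    have hnn : 0 ≤ ∫ x, max (-Λ x) 0 ∂μ₁ :=
      integral_nonneg fun x => le_max_right _ _
    rw [he2] at hkey
    linarith
  have := (integral_eq_zero_iff_of_nonneg (fun x => le_max_right _ _) hmint).mp hsum
  filter_upwards [this] with x hx
  have : max (-Λ x) 0 = 0 := hx
  have := sup_eq_right.mp this
  linarith
end Facts

section Directions
variable {τ S₀ : ℝ} {μ₁ μ₂ : Measure ℝ} {ν : Measure (ℝ × ℝ)}

/-- Direction 2: from a martingale coupling with conditional variance `Λ`, build a
local-volatility model in `M_V` with value `∫ √Λ dμ₁`. -/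
lemma rhs_mem (hτ : 0 < τ) (h₁ : IsMarginal S₀ μ₁) (h₂ : IsMarginal S₀ μ₂)
    (hν : MemM μ₁ μ₂ ν) {Λ : ℝ → ℝ} (hΛ : IsCondLambda τ ν Λ) :
    ∃ μ : Measure (ℝ × ℝ × ℝ), MemMV τ μ₁ μ₂ μ ∧
      (∫ p, p.2.2 ∂μ : ℝ) = ∫ s, Real.sqrt (Λ s) ∂μ₁ := by
  haveI := hν.prob
  have hΛm := hΛ.1
  have hsqm : Measurable fun x => Real.sqrt (Λ x) := Real.continuous_sqrt.measurable.comp hΛ.1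
  set T : ℝ × ℝ → ℝ × ℝ × ℝ := fun p => (p.1, p.2, Real.sqrt (Λ p.1)) with hT
  have hTm : Measurable T :=
    measurable_fst.prodMk (measurable_snd.prodMk (hsqm.comp measurable_fst))
  have haepos : ∀ᵐ p ∂ν, 0 ≤ Λ p.1 := by
    have hnn := hν.lambda_nonneg hτ h₁ h₂ hΛ
    have hNm : MeasurableSet {x : ℝ | 0 ≤ Λ x} := measurableSet_le measurable_const hΛ.1
    have h0 : μ₁ {x : ℝ | 0 ≤ Λ x}ᶜ = 0 := by
      rw [ae_iff] at hnn
      exact hnn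
    exact ae_comp_of_map measurable_fst hν.fst hNm h0
  refine ⟨ν.map T, ⟨?_, ?_, ?_, ?_, ?_, ?_, ?_⟩, ?_⟩
  · exact Measure.isProbabilityMeasure_map hTm.aemeasurable
  · rw [Measure.map_map measurable_fst hTm]; exact hν.fst
  · exact (Measure.map_map (measurable_fst.comp measurable_snd) hTm).trans hν.snd
  · rw [Measure.map_apply hTm
      (measurableSet_lt (measurable_snd.comp measurable_snd) measurable_const :
        MeasurableSet {p : ℝ × ℝ × ℝ | p.2.2 < 0})]
    have : T ⁻¹' {p : ℝ × ℝ × ℝ | p.2.2 < 0} = ∅ := by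
      ext p
      simp [hT, not_lt, Real.sqrt_nonneg]
    rw [this, measure_empty]
  · refine (integrable_map' hTm rfl
      ((measurable_snd.comp measurable_snd).pow_const 2).aestronglyMeasurable).mpr ?_
    refine hΛ.2.1.abs.mono' ((hsqm.comp measurable_fst).pow_const 2).aestronglyMeasurable ?_
    refine Eventually.of_forall fun q => ?_
    rw [Real.norm_eq_abs, abs_of_nonneg (by positivity)]
    exact sq_sqrt_le_abs _
  · intro h hhm hb
    have hintegrand : Measurable fun p : ℝ × ℝ × ℝ => h p.1 p.2.2 * (p.2.1 - p.1) :=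
      (hhm.comp (measurable_fst.prodMk (measurable_snd.comp measurable_snd))).mul
        ((measurable_fst.comp measurable_snd).sub measurable_fst)
    refine (integral_map' hTm rfl hintegrand.aestronglyMeasurable).trans ?_
    exact hν.mart (fun x => h x (Real.sqrt (Λ x)))
      (hhm.comp (measurable_id.prodMk hsqm)) (fun x => hb x _)
  · intro h hhm hb
    have hintegrand : Measurable fun p : ℝ × ℝ × ℝ =>
        h p.1 p.2.2 * (Lf τ (p.2.1 / p.1) - p.2.2 ^ 2) :=
      (hhm.comp (measurable_fst.prodMk (measurable_snd.comp measurable_snd))).mul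
        (((measurable_lf τ).comp
          (measurable_fst.prodMk (measurable_fst.comp measurable_snd))).sub
          ((measurable_snd.comp measurable_snd).pow_const 2))
    have h1 : ∫ p, h p.1 p.2.2 * (Lf τ (p.2.1 / p.1) - p.2.2 ^ 2) ∂(ν.map T)
        = ∫ q : ℝ × ℝ, h q.1 (Real.sqrt (Λ q.1))
            * (Lf τ (q.2 / q.1) - Real.sqrt (Λ q.1) ^ 2) ∂ν :=
      integral_map' hTm rfl hintegrand.aestronglyMeasurable
    set H : ℝ → ℝ := fun x => h x (Real.sqrt (Λ x)) with hH
    have hHm : Measurable H := hhm.comp (measurable_id.prodMk hsqm)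
    have hHb : ∀ x, |H x| ≤ 1 := fun x => hb x _
    have hcong : (fun q : ℝ × ℝ => h q.1 (Real.sqrt (Λ q.1))
          * (Lf τ (q.2 / q.1) - Real.sqrt (Λ q.1) ^ 2))
        =ᵐ[ν] fun q => H q.1 * Lf τ (q.2 / q.1) - H q.1 * Λ q.1 := by
      filter_upwards [haepos] with q hq
      rw [hH]
      simp only
      rw [Real.sq_sqrt hq]
      ring
    have hi1 : Integrable (fun q : ℝ × ℝ => H q.1 * Lf τ (q.2 / q.1)) ν :=
      (hν.lf_integrable hτ h₁ h₂).bdd_mul (hHm.comp measurable_fst).aestronglyMeasurable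
        (c := 1) (Eventually.of_forall fun q => by rw [Real.norm_eq_abs]; exact hHb q.1)
    have hi2 : Integrable (fun q : ℝ × ℝ => H q.1 * Λ q.1) ν :=
      hΛ.2.1.bdd_mul (hHm.comp measurable_fst).aestronglyMeasurable
        (c := 1) (Eventually.of_forall fun q => by rw [Real.norm_eq_abs]; exact hHb q.1)
    rw [h1, integral_congr_ae hcong, integral_sub hi1 hi2, hΛ.2.2 H hHm hHb, sub_self]
  · have h1 : ∫ p, p.2.2 ∂(ν.map T) = ∫ q : ℝ × ℝ, Real.sqrt (Λ q.1) ∂ν :=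
      integral_map' hTm rfl (measurable_snd.comp measurable_snd).aestronglyMeasurable
    have h2 : ∫ s, Real.sqrt (Λ s) ∂μ₁ = ∫ q : ℝ × ℝ, Real.sqrt (Λ q.1) ∂ν :=
      integral_map' measurable_fst hν.fst hsqm.aestronglyMeasurable
    rw [h1, h2]

/-- Direction 1: any model in `M_V` is dominated by a martingale coupling with its
conditional variance. -/
lemma lhs_le (hτ : 0 < τ) (h₁ : IsMarginal S₀ μ₁) (h₂ : IsMarginal S₀ μ₂)
    {μ : Measure (ℝ × ℝ × ℝ)} (hμ : MemMV τ μ₁ μ₂ μ) :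
    ∃ (ν : Measure (ℝ × ℝ)) (Λ : ℝ → ℝ), MemM μ₁ μ₂ ν ∧ IsCondLambda τ ν Λ ∧
      (∫ p, p.2.2 ∂μ) ≤ ∫ s, Real.sqrt (Λ s) ∂μ₁ := by
  haveI := hμ.prob
  haveI := h₁.prob
  haveI := h₂.prob
  set g : ℝ × ℝ × ℝ → ℝ × ℝ := fun q => (q.1, q.2.1) with hg
  have hgm : Measurable g := measurable_fst.prodMk (measurable_fst.comp measurable_snd)
  set ν : Measure (ℝ × ℝ) := μ.map g with hνdef
  haveI : IsProbabilityMeasure ν := Measure.isProbabilityMeasure_map hgm.aemeasurable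
  have hνM : MemM μ₁ μ₂ ν := by
    refine ⟨inferInstance, ?_, ?_, ?_⟩
    · rw [hνdef, Measure.map_map measurable_fst hgm]; exact hμ.fst
    · rw [hνdef, Measure.map_map measurable_snd hgm]; exact hμ.snd
    · intro h hh hb
      have hi : Measurable fun p : ℝ × ℝ => h p.1 * (p.2 - p.1) :=
        (hh.comp measurable_fst).mul (measurable_snd.sub measurable_fst)
      refine (integral_map' hgm rfl hi.aestronglyMeasurable).trans ?_
      exact hμ.mart (fun x _ => h x) (hh.comp measurable_fst) (fun x v => hb x)
  have hLν : Integrable (fun p : ℝ × ℝ => Lf τ (p.2 / p.1)) ν := hνM.lf_integrable hτ h₁ h₂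
  have hLμ : Integrable (fun q : ℝ × ℝ × ℝ => Lf τ (q.2.1 / q.1)) μ :=
    (integrable_map' hgm rfl (measurable_lf τ).aestronglyMeasurable).mp hLν
  set Λ : ℝ → ℝ := fun x => ∫ y, Lf τ (y / x) ∂(ν.condKernel x) with hΛdef
  have hΛm : Measurable Λ :=
    (MeasureTheory.StronglyMeasurable.integral_kernel_prod_right' (κ := ν.condKernel)
      (measurable_lf τ).stronglyMeasurable).measurable
  have hfst : ν.fst = μ₁ := hνM.fst
  have hΛμ₁ : Integrable Λ μ₁ := by
    have := hLν.integral_condKernel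
    rwa [hfst] at this
  have hΛν : Integrable (fun p : ℝ × ℝ => Λ p.1) ν :=
    (integrable_map' measurable_fst hνM.fst hΛm.aestronglyMeasurable).mp hΛμ₁
  have hid : ∀ h : ℝ → ℝ, Measurable h → (∀ x, |h x| ≤ 1) →
      ∫ p : ℝ × ℝ, h p.1 * Lf τ (p.2 / p.1) ∂ν = ∫ x, h x * Λ x ∂μ₁ := by
    intro h hh hb
    have hint : Integrable (fun p : ℝ × ℝ => h p.1 * Lf τ (p.2 / p.1)) ν :=
      hLν.bdd_mul (hh.comp measurable_fst).aestronglyMeasurable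
        (c := 1) (Eventually.of_forall fun p => by rw [Real.norm_eq_abs]; exact hb p.1)
    have hdis := Measure.integral_condKernel hint
    rw [← hdis, hfst]
    congr 1
    funext x
    exact integral_const_mul (h x) (fun y => Lf τ (y / x))
  have htr : ∀ h : ℝ → ℝ, Measurable h →
      ∫ p : ℝ × ℝ, h p.1 * Λ p.1 ∂ν = ∫ x, h x * Λ x ∂μ₁ := fun h hh =>
    (integral_map' measurable_fst hνM.fst (hh.mul hΛm).aestronglyMeasurable).symm
  have hcond : IsCondLambda τ ν Λ :=
    ⟨hΛm, hΛν, fun h hh hb => by rw [hid h hh hb, htr h hh]⟩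
  refine ⟨ν, Λ, hνM, hcond, ?_⟩
  set R := ∫ s, Real.sqrt (Λ s) ∂μ₁ with hR
  have hv2 := hμ.int_v2
  have hVint : Integrable (fun q : ℝ × ℝ × ℝ => q.2.2) μ := by
    have hbd : Integrable (fun q : ℝ × ℝ × ℝ => q.2.2 ^ 2 / 2 + 1 / 2) μ :=
      (hv2.div_const 2).add (integrable_const (1/2 : ℝ))
    refine hbd.mono' (measurable_snd.comp measurable_snd).aestronglyMeasurable ?_
    refine Eventually.of_forall fun q => ?_
    rw [Real.norm_eq_abs]
    nlinarith [sq_nonneg (|q.2.2| - 1), sq_abs q.2.2]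
  have hsqint : Integrable (fun x => Real.sqrt (Λ x)) μ₁ := by
    have hbd : Integrable (fun x => (|Λ x| + 1) / 2) μ₁ :=
      (hΛμ₁.abs.add (integrable_const 1)).div_const 2
    refine hbd.mono' (Real.continuous_sqrt.measurable.comp hΛm).aestronglyMeasurable ?_
    refine Eventually.of_forall fun x => ?_
    rw [Real.norm_eq_abs, abs_of_nonneg (Real.sqrt_nonneg _)]
    exact sqrt_le_half_add _
  have hhalf : ∫ x, Real.sqrt (Λ x) / 2 ∂μ₁ = R / 2 := by rw [integral_div]
  refine le_of_forall_pos_le_add ?_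
  intro ε hε
  set b : ℝ → ℝ := fun x => max (Real.sqrt (Λ x)) ε with hb
  have hbm : Measurable b := (Real.continuous_sqrt.measurable.comp hΛm).max measurable_const
  have hbpos : ∀ x, 0 < b x := fun x => lt_max_of_lt_right hε
  have hbge : ∀ x, ε ≤ b x := fun x => le_max_right _ _
  have hpt : ∀ q : ℝ × ℝ × ℝ, q.2.2 ≤ q.2.2 ^ 2 / (2 * b q.1) + b q.1 / 2 :=
    fun q => amgm_div (hbpos q.1)
  have hgbdd : ∀ x, ‖ε / b x‖ ≤ 1 := by
    intro x
    rw [Real.norm_eq_abs, abs_div, abs_of_pos hε, abs_of_pos (hbpos x), div_le_one (hbpos x)]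
    exact hbge x
  have hE1int : Integrable (fun q : ℝ × ℝ × ℝ => q.2.2 ^ 2 / (2 * b q.1)) μ := by
    have he : (fun q : ℝ × ℝ × ℝ => q.2.2 ^ 2 / (2 * b q.1))
        = fun q => (1 / (2 * b q.1)) * q.2.2 ^ 2 := by funext q; ring
    rw [he]
    refine hv2.bdd_mul
      ((measurable_const.div ((measurable_const.mul hbm))).comp
        measurable_fst).aestronglyMeasurable (c := 1 / (2 * ε)) (Eventually.of_forall ?_)
    intro q
    have h0 := hbpos q.1
    rw [Real.norm_eq_abs, abs_of_pos (by positivity)]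
    exact one_div_le_one_div_of_le (by positivity) (by linarith [hbge q.1])
  have hsqμ : Integrable (fun q : ℝ × ℝ × ℝ => Real.sqrt (Λ q.1)) μ :=
    (integrable_map' measurable_fst hμ.fst
      (Real.continuous_sqrt.measurable.comp hΛm).aestronglyMeasurable).mp hsqint
  have hbint : Integrable (fun q : ℝ × ℝ × ℝ => b q.1 / 2) μ := by
    have hbd : Integrable (fun q : ℝ × ℝ × ℝ => (|Real.sqrt (Λ q.1)| + ε) / 2) μ :=
      (hsqμ.abs.add (integrable_const ε)).div_const 2
    refine hbd.mono' ((hbm.comp measurable_fst).div_const 2).aestronglyMeasurable ?_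
    refine Eventually.of_forall fun q => ?_
    have h0 := hbpos q.1
    rw [Real.norm_eq_abs, abs_of_nonneg (by positivity)]
    have h3 : b q.1 ≤ |Real.sqrt (Λ q.1)| + ε := by
      rw [abs_of_nonneg (Real.sqrt_nonneg _)]
      exact max_le (le_add_of_nonneg_right hε.le) (le_add_of_nonneg_left (Real.sqrt_nonneg _))
    linarith
  have hmono := integral_mono hVint (hE1int.add hbint) hpt
  have hvix := hμ.vix (fun x _ => ε / b x)
    ((measurable_const.div hbm).comp measurable_fst)
    (fun x v => by have := hgbdd x; rwa [Real.norm_eq_abs] at this)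
  have hsplit : ∫ q : ℝ × ℝ × ℝ, (ε / b q.1) * q.2.2 ^ 2 ∂μ
      = ∫ q : ℝ × ℝ × ℝ, (ε / b q.1) * Lf τ (q.2.1 / q.1) ∂μ := by
    have hint1 : Integrable (fun q : ℝ × ℝ × ℝ => (ε / b q.1) * Lf τ (q.2.1 / q.1)) μ :=
      hLμ.bdd_mul ((measurable_const.div hbm).comp measurable_fst).aestronglyMeasurable
        (c := 1) (Eventually.of_forall fun q => hgbdd q.1)
    have hint2 : Integrable (fun q : ℝ × ℝ × ℝ => (ε / b q.1) * q.2.2 ^ 2) μ :=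
      hv2.bdd_mul ((measurable_const.div hbm).comp measurable_fst).aestronglyMeasurable
        (c := 1) (Eventually.of_forall fun q => hgbdd q.1)
    have h0 : ∫ q : ℝ × ℝ × ℝ,
        ((ε / b q.1) * Lf τ (q.2.1 / q.1) - (ε / b q.1) * q.2.2 ^ 2) ∂μ = 0 := by
      have heq : (fun q : ℝ × ℝ × ℝ =>
            (ε / b q.1) * Lf τ (q.2.1 / q.1) - (ε / b q.1) * q.2.2 ^ 2)
          = fun q => (ε / b q.1) * (Lf τ (q.2.1 / q.1) - q.2.2 ^ 2) := by
        funext q; ring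
      rw [heq]
      exact hvix
    rw [integral_sub hint1 hint2] at h0
    linarith
  have hLfμtoν : ∫ q : ℝ × ℝ × ℝ, (ε / b q.1) * Lf τ (q.2.1 / q.1) ∂μ
      = ∫ p : ℝ × ℝ, (ε / b p.1) * Lf τ (p.2 / p.1) ∂ν :=
    (integral_map' hgm rfl (((measurable_const.div hbm).comp measurable_fst).mul
      (measurable_lf τ)).aestronglyMeasurable).symm
  have hLfν : ∫ p : ℝ × ℝ, (ε / b p.1) * Lf τ (p.2 / p.1) ∂ν
      = ∫ x, (ε / b x) * Λ x ∂μ₁ :=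
    hid (fun x => ε / b x) (measurable_const.div hbm)
      (fun x => by have := hgbdd x; rwa [Real.norm_eq_abs] at this)
  have hE1 : ∫ q : ℝ × ℝ × ℝ, q.2.2 ^ 2 / (2 * b q.1) ∂μ = ∫ x, Λ x / (2 * b x) ∂μ₁ := by
    have e1 : (fun q : ℝ × ℝ × ℝ => q.2.2 ^ 2 / (2 * b q.1))
        = fun q => (1 / (2 * ε)) * ((ε / b q.1) * q.2.2 ^ 2) := by
      funext q
      have h1 : b q.1 ≠ 0 := (hbpos q.1).ne'
      have h2 : (ε : ℝ) ≠ 0 := hε.ne'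
      field_simp
    rw [e1, integral_const_mul, hsplit, hLfμtoν, hLfν, ← integral_const_mul]
    refine integral_congr_ae (Eventually.of_forall fun x => ?_)
    have h1 : b x ≠ 0 := (hbpos x).ne'
    have h2 : (ε : ℝ) ≠ 0 := hε.ne'
    field_simp
  have hbE2 : ∫ q : ℝ × ℝ × ℝ, b q.1 / 2 ∂μ = ∫ x, b x / 2 ∂μ₁ :=
    (integral_map' measurable_fst hμ.fst (hbm.div_const 2).aestronglyMeasurable).symm
  have hΛb_int : Integrable (fun x => Λ x / (2 * b x)) μ₁ := by
    have he : (fun x => Λ x / (2 * b x)) = fun x => (1 / (2 * b x)) * Λ x := by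
      funext x; ring
    rw [he]
    refine hΛμ₁.bdd_mul (measurable_const.div
      (measurable_const.mul hbm)).aestronglyMeasurable (c := 1 / (2 * ε)) (Eventually.of_forall ?_)
    intro x
    have h0 := hbpos x
    rw [Real.norm_eq_abs, abs_of_pos (by positivity)]
    exact one_div_le_one_div_of_le (by positivity) (by linarith [hbge x])
  have hest1 : ∫ x, Λ x / (2 * b x) ∂μ₁ ≤ ∫ x, Real.sqrt (Λ x) / 2 ∂μ₁ :=
    integral_mono hΛb_int (hsqint.div_const 2) (fun x => div_twomax_le_sqrt hε)
  have hbμ₁ : Integrable (fun x => b x / 2) μ₁ := by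
    have hbd : Integrable (fun x => (|Real.sqrt (Λ x)| + ε) / 2) μ₁ :=
      (hsqint.abs.add (integrable_const ε)).div_const 2
    refine hbd.mono' (hbm.div_const 2).aestronglyMeasurable ?_
    refine Eventually.of_forall fun x => ?_
    have h0 := hbpos x
    rw [Real.norm_eq_abs, abs_of_nonneg (by positivity)]
    have h3 : b x ≤ |Real.sqrt (Λ x)| + ε := by
      rw [abs_of_nonneg (Real.sqrt_nonneg _)]
      exact max_le (le_add_of_nonneg_right hε.le) (le_add_of_nonneg_left (Real.sqrt_nonneg _))
    linarith
  have hest2 : ∫ x, b x / 2 ∂μ₁ ≤ ∫ x, (Real.sqrt (Λ x) + ε) / 2 ∂μ₁ := by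
    refine integral_mono hbμ₁ ((hsqint.add (integrable_const ε)).div_const 2) fun x => ?_
    have h3 : b x ≤ Real.sqrt (Λ x) + ε :=
      max_le (le_add_of_nonneg_right hε.le) (le_add_of_nonneg_left (Real.sqrt_nonneg _))
    linarith
  have hconst : ∫ x, (Real.sqrt (Λ x) + ε) / 2 ∂μ₁ = R / 2 + ε / 2 := by
    haveI := h₁.prob
    rw [integral_div, integral_add hsqint (integrable_const ε), integral_const, probReal_univ]
    simp [hR]
    ring
  calc ∫ q : ℝ × ℝ × ℝ, q.2.2 ∂μ
      ≤ ∫ q : ℝ × ℝ × ℝ, (q.2.2 ^ 2 / (2 * b q.1) + b q.1 / 2) ∂μ := hmono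
    _ = (∫ q : ℝ × ℝ × ℝ, q.2.2 ^ 2 / (2 * b q.1) ∂μ)
        + ∫ q : ℝ × ℝ × ℝ, b q.1 / 2 ∂μ := integral_add hE1int hbint
    _ ≤ R + ε := by
        rw [hE1, hbE2]
        linarith [hest1, hest2, hconst, hhalf]
end Directions

/-- Local volatility property of the superreplication price: the dual value
`sup_{μ ∈ M_V} E^μ[V]` is attained over models of local volatility type, i.e.
`sup_{μ ∈ M_V} E^μ[V] = sup_{μ ∈ M} E^{μ₁}[√(Λ_μ(S₁))]`. -/
theorem local_vol_superreplication (τ S₀ : ℝ) (hτ : 0 < τ) (hS₀ : 0 < S₀)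
    (μ₁ μ₂ : Measure ℝ) (h₁ : IsMarginal S₀ μ₁) (h₂ : IsMarginal S₀ μ₂) :
    sSup {y : EReal | ∃ μ : Measure (ℝ × ℝ × ℝ), MemMV τ μ₁ μ₂ μ ∧
        y = ((∫ p, p.2.2 ∂μ : ℝ) : EReal)}
      = sSup {y : EReal | ∃ (μ : Measure (ℝ × ℝ)) (Λ : ℝ → ℝ), MemM μ₁ μ₂ μ ∧
          IsCondLambda τ μ Λ ∧ y = ((∫ s, Real.sqrt (Λ s) ∂μ₁ : ℝ) : EReal)} := by
  apply le_antisymm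
  · refine sSup_le ?_
    rintro y ⟨μ, hμ, rfl⟩
    obtain ⟨ν, Λ, hν, hΛ, hle⟩ := lhs_le hτ h₁ h₂ hμ
    refine le_trans ?_ (le_sSup ⟨ν, Λ, hν, hΛ, rfl⟩)
    exact EReal.coe_le_coe_iff.mpr hle
  · refine sSup_le ?_
    rintro y ⟨ν, Λ, hν, hΛ, rfl⟩
    obtain ⟨μ, hμ, hval⟩ := rhs_mem hτ h₁ h₂ hν hΛ
    exact le_sSup ⟨μ, hμ, by rw [hval]⟩
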